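/- arXiv:1506.07817 — 2 statements merged into one kernel-verified Lean document; each statement's English description precedes it below -/
import Mathlib

section
/- Let n be a composite number (i.e., n ≥ 2 and n is not prime) and let Z_n be the cyclic group of order n. Then the diameter of the strong power graph P_s(Z_n) equals 2. -/
/-- The strong power graph of the cyclic group `ZMod n` (written additively):
two distinct vertices `x` and `y` are adjacent iff `a • x = b • y` for some
positive integers `a, b < n`. -/
def strongPowerGraphZ (n : ℕ) : SimpleGraph (ZMod n) where
  Adj x y := x ≠ y ∧ ∃ a b : ℕ, 0 < a ∧ a < n ∧ 0 < b ∧ b < n ∧ a • x = b • y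
  symm := ⟨by
    rintro x y ⟨h, a, b, ha, ha', hb, hb', hab⟩
    exact ⟨h.symm, b, a, hb, hb', ha, ha', hab.symm⟩⟩
  loopless := ⟨by
    rintro x ⟨h, -⟩
    exact h rfl⟩

/-- A nonzero non-unit of `ZMod n` is annihilated by some `0 < a < n`. -/
lemma exists_smul_eq_zero_of_not_isUnit (n : ℕ) [NeZero n] (x : ZMod n)
    (hx : x ≠ 0) (hu : ¬ IsUnit x) : ∃ a : ℕ, 0 < a ∧ a < n ∧ a • x = 0 := by
  set g := Nat.gcd x.val n with hg
  have hgn : g ∣ n := Nat.gcd_dvd_right _ _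
  have hgx : g ∣ x.val := Nat.gcd_dvd_left _ _
  have hn0 : 0 < n := Nat.pos_of_ne_zero (NeZero.ne n)
  have hg1 : 1 < g := by
    rcases Nat.lt_or_ge 1 g with h | h
    · exact h
    · exfalso
      interval_cases g
      · exact hx (by simpa [ZMod.val_eq_zero] using Nat.eq_zero_of_gcd_eq_zero_left hg.symm)
      · exact hu (by rw [← ZMod.natCast_zmod_val x]; exact (ZMod.isUnit_iff_coprime _ _).2 hg.symm)
  have hg0 : 0 < g := by omega
  refine ⟨n / g, Nat.div_pos (Nat.le_of_dvd hn0 hgn) hg0, Nat.div_lt_self hn0 hg1, ?_⟩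
  have : ((n / g) • x : ZMod n) = (((n / g) * x.val : ℕ) : ZMod n) := by
    rw [Nat.cast_mul, ZMod.natCast_zmod_val, nsmul_eq_mul]
  rw [this, ZMod.natCast_eq_zero_iff]
  obtain ⟨k, hk⟩ := hgx
  refine ⟨k, ?_⟩
  calc (n / g) * x.val = (n / g) * (g * k) := by rw [hk]
    _ = ((n / g) * g) * k := by ring
    _ = n * k := by rw [Nat.div_mul_cancel hgn]

/-- Any two distinct nonzero elements of `ZMod n` are adjacent. -/
lemma adj_of_ne_zero (n : ℕ) (hn : 2 ≤ n) (x y : ZMod n) (hxy : x ≠ y)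
    (hx : x ≠ 0) (hy : y ≠ 0) : (strongPowerGraphZ n).Adj x y := by
  haveI : NeZero n := ⟨by omega⟩
  have key : ∀ u v : ZMod n, u ≠ v → u ≠ 0 → IsUnit v →
      (strongPowerGraphZ n).Adj u v := by
    intro u v huv hu hv
    obtain ⟨w, hw⟩ := hv
    set z := u * (↑w⁻¹ : ZMod n) with hz
    have hzv : z * v = u := by
      rw [hz, ← hw, mul_assoc, Units.inv_mul, mul_one]
    have hz0 : z ≠ 0 := fun h => hu (by rw [← hzv, h, zero_mul])
    refine ⟨huv, 1, z.val, one_pos, by omega, ?_, z.val_lt, ?_⟩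
    · exact Nat.pos_of_ne_zero (fun h => hz0 ((ZMod.val_eq_zero z).1 h))
    · rw [one_smul, nsmul_eq_mul, ZMod.natCast_zmod_val, hzv]
  by_cases hux : IsUnit x
  · exact ((key y x hxy.symm hy hux)).symm
  · by_cases huy : IsUnit y
    · exact key x y hxy hx huy
    · obtain ⟨a, ha, ha', hax⟩ := exists_smul_eq_zero_of_not_isUnit n x hx hux
      obtain ⟨b, hb, hb', hby⟩ := exists_smul_eq_zero_of_not_isUnit n y hy huy
      exact ⟨hxy, a, b, ha, ha', hb, hb', by rw [hax, hby]⟩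

/-- For a composite number `n`, the diameter of the strong power graph of
`ZMod n` equals `2`. -/
theorem strongPowerGraphZ_diam_eq_two (n : ℕ) (hn : 2 ≤ n) (hnp : ¬ n.Prime) :
    (strongPowerGraphZ n).diam = 2 := by
  haveI : NeZero n := ⟨by omega⟩
  haveI : Fact (1 < n) := ⟨by omega⟩
  set G := strongPowerGraphZ n with hG
  obtain ⟨d, hdn, hd2, hdlt⟩ := Nat.exists_dvd_of_not_prime2 hn hnp
  set w : ZMod n := (d : ZMod n) with hw
  have hw0 : w ≠ 0 := by
    rw [hw, Ne, ZMod.natCast_eq_zero_iff]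
    intro h
    have := Nat.le_of_dvd (by omega) h
    omega
  -- w is adjacent to 0
  have hadj0w : G.Adj 0 w := by
    refine ⟨fun h => hw0 h.symm, 1, n / d, one_pos, by omega,
      Nat.div_pos (Nat.le_of_dvd (by omega) hdn) (by omega),
      Nat.div_lt_self (by omega) (by omega), ?_⟩
    rw [smul_zero, hw, nsmul_eq_mul, ← Nat.cast_mul, Nat.div_mul_cancel hdn, ZMod.natCast_self]
  -- every pair is at edist ≤ 2
  have hub : ∀ u v : ZMod n, G.edist u v ≤ 2 := by
    have h0 : ∀ v : ZMod n, v ≠ 0 → G.edist 0 v ≤ 2 := by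
      intro v hv
      by_cases hwv : w = v
      · rw [← hwv]
        exact le_trans (le_of_eq ((G.edist_eq_one_iff_adj).2 hadj0w)) (by norm_num)
      · have h1 : G.edist 0 w = 1 := (G.edist_eq_one_iff_adj).2 hadj0w
        have h2 : G.edist w v = 1 :=
          (G.edist_eq_one_iff_adj).2 (adj_of_ne_zero n hn w v hwv hw0 hv)
        calc G.edist 0 v ≤ G.edist 0 w + G.edist w v := SimpleGraph.edist_triangle
          _ = 2 := by rw [h1, h2]; rfl
    intro u v
    by_cases huv : u = v
    · simp [huv, SimpleGraph.edist_self]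
    by_cases hu : u = 0
    · rw [hu]; exact h0 v (fun h => huv (hu.trans h.symm))
    by_cases hv : v = 0
    · rw [hv, SimpleGraph.edist_comm]; exact h0 u hu
    · exact le_trans
        (le_of_eq ((G.edist_eq_one_iff_adj).2 (adj_of_ne_zero n hn u v huv hu hv)))
        (by norm_num)
  -- 0 and 1 are not adjacent
  have hnadj : ¬ G.Adj 0 1 := by
    rintro ⟨-, a, b, ha, ha', hb, hb', hab⟩
    simp only [smul_zero, nsmul_eq_mul, mul_one] at hab
    have : (b : ZMod n) = 0 := hab.symm
    rw [ZMod.natCast_eq_zero_iff] at this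
    have := Nat.le_of_dvd hb this
    omega
  have h01 : G.edist 0 1 = 2 := by
    have hne : (0 : ZMod n) ≠ 1 := zero_ne_one
    have h0 : G.edist 0 1 ≠ 0 := by
      rw [Ne, SimpleGraph.edist_eq_zero_iff]; exact hne
    have h1 : G.edist 0 1 ≠ 1 := by
      rw [Ne, SimpleGraph.edist_eq_one_iff_adj]; exact hnadj
    have h2 := hub 0 1
    cases hke : G.edist 0 1 with
    | top => rw [hke] at h2; exact absurd h2 (by norm_num)
    | coe k =>
      rw [hke] at h0 h1 h2
      norm_cast at h0 h1 h2
      have hk2 : k = 2 := by omega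
      rw [hk2]; rfl
  have hediam : G.ediam = 2 := by
    refine le_antisymm (SimpleGraph.ediam_le_of_edist_le hub) ?_
    rw [← h01]; exact SimpleGraph.edist_le_ediam
  rw [SimpleGraph.diam, hediam]; rfl
end

section
/- Let G be a finite group of order n that is not cyclic. Then the characteristic polynomial of the adjacency matrix of the strong power graph P_s(G) equals (x - (n-1)) · (x+1)^{n-1}; equivalently, the adjacency spectrum of P_s(G) consists of the eigenvalue n-1 with multiplicity 1 and the eigenvalue -1 with multiplicity n-1. -/
/-- The strong power graph of a finite group `G` of order `n`: two distinct
vertices `x` and `y` are adjacent iff `x ^ a = y ^ b` for some positive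
integers `a, b < n`. -/
def strongPowerGraph (G : Type*) [Group G] [Fintype G] : SimpleGraph G where
  Adj x y := x ≠ y ∧ ∃ a b : ℕ, 0 < a ∧ a < Fintype.card G ∧ 0 < b ∧ b < Fintype.card G ∧
    x ^ a = y ^ b
  symm := by
    refine ⟨?_⟩
    rintro x y ⟨h, a, b, ha, ha', hb, hb', hab⟩
    exact ⟨h.symm, b, a, hb, hb', ha, ha', hab.symm⟩
  loopless := by
    refine ⟨?_⟩
    rintro x ⟨h, -⟩
    exact h rfl

/-- The distance matrix (with real entries) of the strong power graph of `G`. -/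
noncomputable def distMatrixG (G : Type*) [Group G] [Fintype G] : Matrix G G ℝ :=
  Matrix.of fun i j => ((strongPowerGraph G).dist i j : ℝ)

open Classical in
/-- The adjacency matrix (with real entries) of the strong power graph of `G`. -/
noncomputable def adjMatrixG (G : Type*) [Group G] [Fintype G] : Matrix G G ℝ :=
  Matrix.of fun i j => if (strongPowerGraph G).Adj i j then 1 else 0


open Polynomial Matrix

lemma charpoly_of_complete {m : Type*} [Fintype m] [DecidableEq m] [Nonempty m]
    (A : Matrix m m ℝ) (hA : ∀ i j, A i j = if i = j then (0:ℝ) else 1) :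
    A.charpoly = (X - C ((Fintype.card m : ℝ) - 1)) * (X + 1) ^ (Fintype.card m - 1) := by
  classical
  set n := Fintype.card m with hn
  have hn1 : 1 ≤ n := Fintype.card_pos
  -- charmatrix
  have hchar : charmatrix A = ((X + 1 : ℝ[X]) • (1 : Matrix m m ℝ[X])) - Matrix.of (fun _ _ => (1:ℝ[X])) := by
    ext i j
    by_cases h : i = j
    · subst h
      simp [charmatrix_apply_eq, hA, Matrix.one_apply]
    · simp [charmatrix_apply_ne _ _ _ h, hA, h, Matrix.one_apply_ne h]
  rw [Matrix.charpoly, hchar]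
  -- move to fraction field
  set K := FractionRing ℝ[X]
  let f : ℝ[X] →+* K := algebraMap ℝ[X] K
  have hf : Function.Injective f := IsFractionRing.injective ℝ[X] K
  apply hf
  rw [RingHom.map_det]
  set c : K := f (X + 1) with hc
  have hX1 : (X + 1 : ℝ[X]) ≠ 0 := fun h => by simpa using congrArg (Polynomial.eval 0) h
  have hc0 : c ≠ 0 := by
    simp only [hc]
    intro h
    exact hX1 (hf (h.trans (map_zero f).symm))
  have hmap : (((X + 1 : ℝ[X]) • (1 : Matrix m m ℝ[X])) - Matrix.of (fun _ _ => (1:ℝ[X]))).map f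
      = c • (1 : Matrix m m K) - Matrix.of (fun _ _ => (1:K)) := by
    ext i j
    by_cases h : i = j <;>
      simp [Matrix.map_apply, Matrix.one_apply, h, hc, smul_eq_mul]
  rw [RingHom.mapMatrix_apply, hmap]
  have hfactor : c • (1 : Matrix m m K) - Matrix.of (fun _ _ => (1:K))
      = c • ((1 : Matrix m m K) + Matrix.replicateCol Unit (fun _ : m => -c⁻¹) * Matrix.replicateRow Unit (fun _ : m => (1:K))) := by
    ext i j
    by_cases h : i = j <;>
      · simp only [Matrix.sub_apply, Matrix.smul_apply, Matrix.add_apply, Matrix.one_apply,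
          Matrix.of_apply, Matrix.mul_apply, Matrix.replicateCol_apply, Matrix.replicateRow_apply, h,
          if_true, if_neg, smul_eq_mul, Finset.sum_const, Finset.card_univ, Fintype.card_unit,
          one_smul]
        <;> linear_combination mul_inv_cancel₀ hc0
  rw [hfactor, Matrix.det_smul, Matrix.det_one_add_replicateCol_mul_replicateRow]
  have hdot : (fun _ : m => (1:K)) ⬝ᵥ (fun _ => -c⁻¹) = -(n * c⁻¹) := by
    simp [dotProduct, hn, Finset.sum_const, nsmul_eq_mul]
  rw [hdot]
  -- RHS
  have hRHS : f ((X - C ((n : ℝ) - 1)) * (X + 1) ^ (n - 1)) = (c - n) * c ^ (n - 1) := by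
    have key : (X - C ((n : ℝ) - 1) : ℝ[X]) = (X + 1) - (n : ℝ[X]) := by
      rw [map_sub C, Polynomial.C_1, Polynomial.C_eq_natCast]; ring
    have h1 : f (X - C ((n : ℝ) - 1)) = c - n := by
      rw [key, map_sub f, map_natCast f, hc]
    rw [map_mul f, map_pow f, h1]
  rw [hRHS]
  have hcn : c ^ n = c ^ (n - 1) * c := by
    rw [← pow_succ, Nat.sub_add_cancel hn1]
  rw [hcn]
  linear_combination (-(n:K) * c ^ (n - 1)) * mul_inv_cancel₀ hc0


open Polynomial in
/-- If a finite group `G` of order `n` is not cyclic, then the characteristic polynomial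
of the adjacency matrix of its strong power graph is `(x - (n-1)) * (x+1)^(n-1)`;
equivalently its adjacency spectrum is `n-1` (multiplicity 1) and `-1` (multiplicity `n-1`). -/
theorem adjMatrixG_charpoly_of_not_isCyclic
    (G : Type*) [Group G] [Fintype G] [DecidableEq G] (hG : ¬ IsCyclic G) :
    (adjMatrixG G).charpoly =
      (X - C ((Fintype.card G : ℝ) - 1)) * (X + 1) ^ (Fintype.card G - 1) := by
  classical
  apply charpoly_of_complete
  intro i j
  by_cases h : i = j
  · simp [adjMatrixG, strongPowerGraph, h]
  · have hadj : (strongPowerGraph G).Adj i j := by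
      refine ⟨h, orderOf i, orderOf j, orderOf_pos i, ?_, orderOf_pos j, ?_, by
        rw [pow_orderOf_eq_one, pow_orderOf_eq_one]⟩
      · refine lt_of_le_of_ne (orderOf_le_card_univ) (fun he => hG ?_)
        exact isCyclic_of_orderOf_eq_card i (by rw [Nat.card_eq_fintype_card]; exact he)
      · refine lt_of_le_of_ne (orderOf_le_card_univ) (fun he => hG ?_)
        exact isCyclic_of_orderOf_eq_card j (by rw [Nat.card_eq_fintype_card]; exact he)
    simp [adjMatrixG, h, hadj]
end
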